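/- The winding number around the origin of ζ ↦ det(−G(ζ)̄⁻¹ G(ζ)), for G(ζ) the upper block-triangular (2n+2d)×(2n+2d) matrix with diagonal blocks ½I_d, G₂(ζ) = [[ζAᵗ, Iₙ],[iζAᵗ, −iIₙ]], and −iζI_d, equals 2n + 2d. -/

import Mathlib

open Matrix

lemma detG2_aux (n : ℕ) (A : Matrix (Fin n) (Fin n) ℂ) (ζ : ℂ) :
    (Matrix.fromBlocks (ζ • A.transpose) (1 : Matrix (Fin n) (Fin n) ℂ)
      ((Complex.I * ζ) • A.transpose)
      ((-Complex.I) • (1 : Matrix (Fin n) (Fin n) ℂ))).det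
    = (-2 * Complex.I) ^ n * A.det * ζ ^ n := by
  have hE : (Matrix.fromBlocks (1 : Matrix (Fin n) (Fin n) ℂ) 0
      ((-Complex.I) • (1 : Matrix (Fin n) (Fin n) ℂ)) 1) *
      Matrix.fromBlocks (ζ • A.transpose) (1 : Matrix (Fin n) (Fin n) ℂ)
        ((Complex.I * ζ) • A.transpose) ((-Complex.I) • (1 : Matrix (Fin n) (Fin n) ℂ))
    = Matrix.fromBlocks (ζ • A.transpose) (1 : Matrix (Fin n) (Fin n) ℂ) 0
        ((-2 * Complex.I) • (1 : Matrix (Fin n) (Fin n) ℂ)) := by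
    rw [Matrix.fromBlocks_multiply]
    simp [Matrix.smul_mul, Matrix.mul_smul, smul_smul]
    constructor
    · have h0 : -(ζ * Complex.I) + Complex.I * ζ = 0 := by ring
      rw [← neg_smul, ← add_smul, h0, zero_smul]
    · rw [← neg_smul, ← neg_smul, ← add_smul]
      congr 1
      ring
  have hdetE : (Matrix.fromBlocks (1 : Matrix (Fin n) (Fin n) ℂ) 0
      ((-Complex.I) • (1 : Matrix (Fin n) (Fin n) ℂ)) 1).det = 1 := by
    rw [Matrix.det_fromBlocks_zero₁₂]
    simp
  have := congrArg Matrix.det hE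
  rw [Matrix.det_mul, hdetE, one_mul] at this
  rw [this, Matrix.det_fromBlocks_zero₂₁, Matrix.det_smul, Matrix.det_smul]
  simp [Matrix.det_transpose]
  ring

/-- Maslov index computation: for `G(ζ)` the upper block-triangular matrix of
size `2n+2d` with diagonal blocks `½I_d`, `G₂(ζ) = [[ζAᵗ, Iₙ],[iζAᵗ, −iIₙ]]`
and `−iζ I_d` (and arbitrary upper off-diagonal blocks `B(ζ)`, `C(ζ)`), the
function `ζ ↦ det(−G(ζ)̄⁻¹ G(ζ))` on the unit circle equals `c₀ ζ^(2n+2d)`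
for some nonzero constant `c₀`; hence its winding number around the origin is
`2n + 2d`. -/
theorem maslov_index_eq (n d : ℕ)
    (A : Matrix (Fin n) (Fin n) ℂ) (hA : IsUnit A)
    (B : ℂ → Matrix (Fin d) ((Fin n ⊕ Fin n) ⊕ Fin d) ℂ)
    (C : ℂ → Matrix (Fin n ⊕ Fin n) (Fin d) ℂ)
    (G : ℂ → Matrix (Fin d ⊕ ((Fin n ⊕ Fin n) ⊕ Fin d))
                    (Fin d ⊕ ((Fin n ⊕ Fin n) ⊕ Fin d)) ℂ)
    (hG : ∀ ζ, G ζ = Matrix.fromBlocks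
        ((1 / 2 : ℂ) • (1 : Matrix (Fin d) (Fin d) ℂ)) (B ζ) 0
        (Matrix.fromBlocks
          (Matrix.fromBlocks (ζ • A.transpose) (1 : Matrix (Fin n) (Fin n) ℂ)
            ((Complex.I * ζ) • A.transpose)
            ((-Complex.I) • (1 : Matrix (Fin n) (Fin n) ℂ)))
          (C ζ) 0 ((-Complex.I * ζ) • (1 : Matrix (Fin d) (Fin d) ℂ)))) :
    ∃ c₀ : ℂ, c₀ ≠ 0 ∧ ∀ ζ : ℂ, ‖ζ‖ = 1 →
      Matrix.det (-(((G ζ).map (starRingEnd ℂ))⁻¹ * G ζ)) =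
        c₀ * ζ ^ (2 * n + 2 * d) := by
  set k : ℂ := (1 / 2) ^ d * ((-2 * Complex.I) ^ n * A.det) * (-Complex.I) ^ d with hk
  have hdetA : A.det ≠ 0 := by
    have := (Matrix.isUnit_iff_isUnit_det A).mp hA
    exact this.ne_zero
  have hkne : k ≠ 0 := by
    exact mul_ne_zero (mul_ne_zero (pow_ne_zero _ (by norm_num))
      (mul_ne_zero (pow_ne_zero _ (mul_ne_zero (by norm_num) Complex.I_ne_zero)) hdetA))
      (pow_ne_zero _ (neg_ne_zero.mpr Complex.I_ne_zero))
  -- determinant of G ζ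
  have hdetG : ∀ ζ : ℂ, (G ζ).det = k * ζ ^ (n + d) := by
    intro ζ
    rw [hG ζ, Matrix.det_fromBlocks_zero₂₁, Matrix.det_fromBlocks_zero₂₁,
      detG2_aux, Matrix.det_smul, Matrix.det_smul]
    simp [mul_pow, pow_add, hk]
    ring
  refine ⟨k / (starRingEnd ℂ) k, div_ne_zero hkne (by simpa using hkne), ?_⟩
  intro ζ hζ
  have hζne : ζ ≠ 0 := by
    intro h; rw [h] at hζ; simp at hζ
  have h1 : ζ * (starRingEnd ℂ) ζ = 1 := by
    rw [Complex.mul_conj]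
    norm_cast
    rw [Complex.normSq_eq_norm_sq, hζ]; norm_num
  have hconj : (starRingEnd ℂ) ζ = ζ⁻¹ := (inv_eq_of_mul_eq_one_right h1).symm
  have hdetGbar : ((G ζ).map (starRingEnd ℂ)).det
      = (starRingEnd ℂ) k * (ζ⁻¹) ^ (n + d) := by
    have h := RingHom.map_det (starRingEnd ℂ) (G ζ)
    rw [RingHom.mapMatrix_apply] at h
    rw [← h, hdetG ζ, _root_.map_mul, _root_.map_pow, hconj]
  have hcard : Fintype.card (Fin d ⊕ ((Fin n ⊕ Fin n) ⊕ Fin d)) = 2 * n + 2 * d := by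
    simp [Fintype.card_sum]; ring
  rw [Matrix.det_neg, Matrix.det_mul, Matrix.det_nonsing_inv, hdetGbar, hdetG ζ,
    hcard, Ring.inverse_eq_inv']
  have heven : ((-1 : ℂ)) ^ (2 * n + 2 * d) = 1 := by
    apply Even.neg_one_pow
    exact ⟨n + d, by ring⟩
  rw [heven, one_mul, mul_inv, inv_pow, inv_inv]
  rw [div_eq_mul_inv]
  have : 2 * n + 2 * d = (n + d) + (n + d) := by ring
  rw [this, pow_add]
  ring
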